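/- There is no program solving the TwoHalt problem: there is no Turing machine T that, given a pair of indices (i,j) of Turing machines, outputs 1 if T_i halts on input i and T_j loops on input j; outputs 2 if T_i loops on input i and T_j halts on input j; halts and outputs 1 or 2 if both loop; and may behave arbitrarily (output 1 or 2 or loop) if both halt. -/

import Mathlib

open Nat.Partrec (Code)
open Nat.Partrec.Code

/-- `T_i(i)` halts, where `(T_i)` is the standard enumeration of Turing machines
(partial recursive functions) via `Nat.Partrec.Code`. -/
def selfHalts (i : ℕ) : Prop := ((Denumerable.ofNat Code i).eval i).Dom

/-- A "guarded" partial computation `P.bind (guard on value t)` halts iff `t ∈ P`. -/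
lemma guard_dom (P : Part ℕ) (t : ℕ) :
    (P.bind (fun v => cond (decide (v = t)) (Part.some 0) Part.none)).Dom ↔ t ∈ P := by
  rw [Part.dom_iff_mem]
  constructor
  · rintro ⟨y, hy⟩
    rw [Part.mem_bind_iff] at hy
    obtain ⟨v, hv, hy⟩ := hy
    by_cases h : v = t
    · exact h ▸ hv
    · simp [h] at hy
  · intro ht
    exact ⟨0, Part.mem_bind_iff.2 ⟨t, ht, by simp⟩⟩

/-- There is no program solving the TwoHalt problem: no Turing machine `c` that, on
input the pair `(i,j)`, outputs `1` if `T_i(i)` halts and `T_j(j)` loops, outputs `2`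
if `T_i(i)` loops and `T_j(j)` halts, halts with output `1` or `2` if both loop, and
may behave arbitrarily if both halt. -/
theorem twoHalt_undecidable :
    ¬ ∃ c : Code, ∀ i j : ℕ,
      (selfHalts i ∧ ¬ selfHalts j → c.eval (Nat.pair i j) = Part.some 1) ∧
      (¬ selfHalts i ∧ selfHalts j → c.eval (Nat.pair i j) = Part.some 2) ∧
      (¬ selfHalts i ∧ ¬ selfHalts j →
        (c.eval (Nat.pair i j)).Dom ∧ ∀ v ∈ c.eval (Nat.pair i j), v = 1 ∨ v = 2) := by
  rintro ⟨C, hC⟩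
  -- Diagonal machine: on input `(k, x)`, run `C` on the pair of the two diagonal codes
  -- below, halting iff the answer is `2` (when `k = 1`) resp. `1` (otherwise).
  set f : Code → ℕ →. ℕ := fun d n =>
    (C.eval (Nat.pair (Encodable.encode (d.curry 1)) (Encodable.encode (d.curry 2)))).bind
      (fun v => cond (decide (v = if n.unpair.1 = 1 then 2 else 1)) (Part.some 0) Part.none)
    with hf
  have hfp : Partrec₂ f := by
    apply Partrec.bind
    · exact eval_part.comp (Computable.const C)
        (Primrec₂.natPair.comp
          (Primrec.encode.comp (primrec₂_curry.comp Primrec.fst (Primrec.const 1)))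
          (Primrec.encode.comp (primrec₂_curry.comp Primrec.fst (Primrec.const 2)))).to_comp
    · apply Partrec.cond
      · exact (Primrec.eq.comp Primrec.snd
          (Primrec.ite
            (Primrec.eq.comp (Primrec.fst.comp (Primrec.unpair.comp
              (Primrec.snd.comp Primrec.fst))) (Primrec.const 1))
            (Primrec.const 2) (Primrec.const 1))).decide.to_comp
      · exact Partrec.const' (Part.some 0)
      · exact Partrec.none
  obtain ⟨e, he⟩ := fixed_point₂ hfp
  set a := Encodable.encode (e.curry 1) with ha
  set b := Encodable.encode (e.curry 2) with hb
  have hselfa : selfHalts a ↔ (2 : ℕ) ∈ C.eval (Nat.pair a b) := by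
    unfold selfHalts
    rw [ha, Denumerable.ofNat_encode, eval_curry, ← ha, he]
    simp only [hf, Nat.unpair_pair, if_pos rfl]
    exact guard_dom _ 2
  have hselfb : selfHalts b ↔ (1 : ℕ) ∈ C.eval (Nat.pair a b) := by
    unfold selfHalts
    rw [hb, Denumerable.ofNat_encode, eval_curry, ← hb, he]
    simp only [hf, Nat.unpair_pair]
    rw [if_neg (by norm_num)]
    exact guard_dom _ 1
  obtain ⟨h1, h2, h3⟩ := hC a b
  by_cases hsa : selfHalts a
  · have h2mem : (2 : ℕ) ∈ C.eval (Nat.pair a b) := hselfa.1 hsa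
    by_cases hsb : selfHalts b
    · have h1mem : (1 : ℕ) ∈ C.eval (Nat.pair a b) := hselfb.1 hsb
      exact absurd (Part.mem_unique h1mem h2mem) (by norm_num)
    · have := h1 ⟨hsa, hsb⟩
      rw [this] at h2mem
      simp at h2mem
  · by_cases hsb : selfHalts b
    · have h1mem : (1 : ℕ) ∈ C.eval (Nat.pair a b) := hselfb.1 hsb
      have := h2 ⟨hsa, hsb⟩
      rw [this] at h1mem
      simp at h1mem
    · obtain ⟨hdom, hv⟩ := h3 ⟨hsa, hsb⟩
      obtain ⟨v, hvm⟩ := Part.dom_iff_mem.1 hdom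
      rcases hv v hvm with rfl | rfl
      · exact hsb (hselfb.2 hvm)
      · exact hsa (hselfa.2 hvm)
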